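/- Let K, σ, S > 0 and r ∈ ℝ. For t̃ > 0 define d₁(t̃) = (log(S/K) + (r + σ²/2) t̃²)/(σ t̃), d₂(t̃) = d₁(t̃) − σ t̃, and the time-changed Black–Scholes call value C̃(t̃) = S Φ(d₁(t̃)) − K e^{−r t̃²} Φ(d₂(t̃)), where Φ is the standard normal cumulative distribution function and φ its density. Then C̃ is differentiable on (0, ∞) with C̃′(t̃) = S σ φ(d₁(t̃)) + 2 t̃ r K e^{−r t̃²} Φ(d₂(t̃)), and C̃′ has a finite limit as t̃ → 0⁺ (equal to 0 if S ≠ K, and to Sσ/√(2π) if S = K); in particular the time-changed theta is not singular at t̃ = 0. -/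

import Mathlib

/-- The standard normal cumulative distribution function
`Φ(x) = (2π)^{-1/2} ∫_{-∞}^x e^{-u²/2} du`. -/
noncomputable def stdCDF (x : ℝ) : ℝ :=
  (Real.sqrt (2 * Real.pi))⁻¹ * ∫ u in Set.Iic x, Real.exp (-u ^ 2 / 2)

/-- The standard normal density `φ(x) = (2π)^{-1/2} e^{-x²/2}`. -/
noncomputable def stdPDF (x : ℝ) : ℝ :=
  (Real.sqrt (2 * Real.pi))⁻¹ * Real.exp (-x ^ 2 / 2)

section Helpers
open MeasureTheory Filter Real
set_option maxHeartbeats 800000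

lemma gauss_integrable : MeasureTheory.Integrable (fun u : ℝ => Real.exp (-u ^ 2 / 2)) := by
  have h : (fun u : ℝ => Real.exp (-u ^ 2 / 2)) = fun u => Real.exp (-(1/2) * u ^ 2) := by
    funext u; congr 1; ring
  rw [h]; exact integrable_exp_neg_mul_sq (by norm_num)

lemma gauss_integral : (∫ u : ℝ, Real.exp (-u ^ 2 / 2)) = Real.sqrt (2 * Real.pi) := by
  have h : (fun u : ℝ => Real.exp (-u ^ 2 / 2)) = fun u => Real.exp (-(1/2) * u ^ 2) := by
    funext u; congr 1; ring
  rw [h, integral_gaussian]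
  rw [show Real.pi / (1/2 : ℝ) = 2 * Real.pi by ring]

lemma hasDerivAt_stdCDF (x : ℝ) : HasDerivAt stdCDF (stdPDF x) x := by
  have hint := gauss_integrable
  have hcont : Continuous fun u : ℝ => Real.exp (-u ^ 2 / 2) := by fun_prop
  have key : ∀ y : ℝ, (∫ u in Set.Iic y, Real.exp (-u ^ 2 / 2))
      = (∫ u in Set.Iic (0:ℝ), Real.exp (-u ^ 2 / 2)) + ∫ u in (0:ℝ)..y, Real.exp (-u ^ 2 / 2) := by
    intro y
    have := intervalIntegral.integral_Iic_sub_Iic (μ := volume)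
      (f := fun u : ℝ => Real.exp (-u ^ 2 / 2)) hint.integrableOn hint.integrableOn
      (a := 0) (b := y)
    linarith
  have hFTC : HasDerivAt (fun y => ∫ u in (0:ℝ)..y, Real.exp (-u ^ 2 / 2))
      (Real.exp (-x ^ 2 / 2)) x :=
    intervalIntegral.integral_hasDerivAt_right hint.intervalIntegrable
      (hcont.stronglyMeasurableAtFilter _ _) hcont.continuousAt
  have h2 : HasDerivAt (fun y => (Real.sqrt (2 * Real.pi))⁻¹ *
      ((∫ u in Set.Iic (0:ℝ), Real.exp (-u ^ 2 / 2)) + ∫ u in (0:ℝ)..y, Real.exp (-u ^ 2 / 2)))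
      ((Real.sqrt (2 * Real.pi))⁻¹ * Real.exp (-x ^ 2 / 2)) x :=
    (hFTC.const_add _).const_mul _
  have heq : stdCDF = fun y => (Real.sqrt (2 * Real.pi))⁻¹ *
      ((∫ u in Set.Iic (0:ℝ), Real.exp (-u ^ 2 / 2)) + ∫ u in (0:ℝ)..y, Real.exp (-u ^ 2 / 2)) :=
    funext fun y => by rw [stdCDF, key y]
  rw [show stdPDF x = (Real.sqrt (2 * Real.pi))⁻¹ * Real.exp (-x ^ 2 / 2) from rfl, heq]
  exact h2

lemma stdCDF_nonneg (x : ℝ) : 0 ≤ stdCDF x := by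
  refine mul_nonneg (inv_nonneg.2 (Real.sqrt_nonneg _)) ?_
  exact setIntegral_nonneg measurableSet_Iic fun u _ => (Real.exp_pos _).le

lemma stdCDF_le_one (x : ℝ) : stdCDF x ≤ 1 := by
  have h1 : (∫ u in Set.Iic x, Real.exp (-u ^ 2 / 2)) ≤ ∫ u : ℝ, Real.exp (-u ^ 2 / 2) :=
    setIntegral_le_integral gauss_integrable (Filter.Eventually.of_forall fun u => (Real.exp_pos _).le)
  have hs : 0 < Real.sqrt (2 * Real.pi) := Real.sqrt_pos.2 (by positivity)
  rw [stdCDF]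
  rw [gauss_integral] at h1
  calc (Real.sqrt (2 * Real.pi))⁻¹ * ∫ u in Set.Iic x, Real.exp (-u ^ 2 / 2)
      ≤ (Real.sqrt (2 * Real.pi))⁻¹ * Real.sqrt (2 * Real.pi) := by
        exact mul_le_mul_of_nonneg_left h1 (inv_nonneg.2 hs.le)
    _ = 1 := inv_mul_cancel₀ hs.ne'

lemma tendsto_stdPDF_of_sq {l : Filter ℝ} (h : Tendsto (fun x => x ^ 2) l atTop) :
    Tendsto stdPDF l (nhds 0) := by
  have h1 : Tendsto (fun x : ℝ => -x ^ 2 / 2) l atBot := by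
    have := (h.atTop_div_const (by norm_num : (0:ℝ) < 2))
    have h2 := tendsto_neg_atTop_atBot.comp this
    refine h2.congr fun x => ?_
    simp [neg_div]
  have h2 : Tendsto (fun x => Real.exp (-x ^ 2 / 2)) l (nhds 0) :=
    Real.tendsto_exp_atBot.comp h1
  have h3 := h2.const_mul (Real.sqrt (2 * Real.pi))⁻¹
  rw [mul_zero] at h3
  exact h3

lemma continuous_stdPDF : Continuous stdPDF := by unfold stdPDF; fun_prop

end Helpers

open MeasureTheory Filter Real in
set_option maxHeartbeats 800000 in
/-- the time-changed Black–Scholes call value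
`C̃(t̃) = S Φ(d₁(t̃)) − K e^{−rt̃²} Φ(d₂(t̃))` has derivative
`C̃′(t̃) = Sσφ(d₁(t̃)) + 2t̃rK e^{−rt̃²} Φ(d₂(t̃))` on `(0,∞)`, and `C̃′` has a finite
limit as `t̃ → 0⁺`, namely `0` if `S ≠ K` and `Sσ/√(2π)` if `S = K`. -/
theorem stmt18 (K σ S r : ℝ) (hK : 0 < K) (hσ : 0 < σ) (hS : 0 < S)
    (d₁ d₂ C : ℝ → ℝ)
    (hd₁ : ∀ t : ℝ, d₁ t = (Real.log (S / K) + (r + σ ^ 2 / 2) * t ^ 2) / (σ * t))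
    (hd₂ : ∀ t : ℝ, d₂ t = d₁ t - σ * t)
    (hC : ∀ t : ℝ, C t = S * stdCDF (d₁ t) - K * Real.exp (-r * t ^ 2) * stdCDF (d₂ t)) :
    (∀ t : ℝ, 0 < t →
      HasDerivAt C
        (S * σ * stdPDF (d₁ t) + 2 * t * r * K * Real.exp (-r * t ^ 2) * stdCDF (d₂ t)) t) ∧
    Filter.Tendsto (deriv C) (nhdsWithin 0 (Set.Ioi 0))
      (nhds (if S = K then S * σ / Real.sqrt (2 * Real.pi) else 0)) := by
  set L : ℝ := Real.log (S / K) with hL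
  -- key identity
  have key : ∀ t : ℝ, 0 < t →
      S * stdPDF (d₁ t) = K * Real.exp (-r * t ^ 2) * stdPDF (d₂ t) := by
    intro t ht
    have ht' : t ≠ 0 := ne_of_gt ht
    have hσt : σ * t ≠ 0 := mul_ne_zero hσ.ne' ht'
    have hD : σ * t * d₁ t = L + (r + σ ^ 2 / 2) * t ^ 2 := by
      rw [hd₁]; field_simp
    have hexp : Real.exp L = S / K := Real.exp_log (by positivity)
    rw [hd₂]
    unfold stdPDF
    have h1 : -r * t ^ 2 + (-(d₁ t - σ * t) ^ 2 / 2) = L + (-(d₁ t) ^ 2 / 2) := by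
      nlinarith [hD]
    calc S * ((Real.sqrt (2 * Real.pi))⁻¹ * Real.exp (-(d₁ t) ^ 2 / 2))
        = (Real.sqrt (2 * Real.pi))⁻¹ * (S * Real.exp (-(d₁ t) ^ 2 / 2)) := by ring
      _ = (Real.sqrt (2 * Real.pi))⁻¹ * (K * (Real.exp L * Real.exp (-(d₁ t) ^ 2 / 2))) := by
          rw [hexp]; field_simp
      _ = (Real.sqrt (2 * Real.pi))⁻¹ * (K * Real.exp (L + (-(d₁ t) ^ 2 / 2))) := by
          rw [Real.exp_add]
      _ = (Real.sqrt (2 * Real.pi))⁻¹ * (K * Real.exp (-r * t ^ 2 + (-(d₁ t - σ * t) ^ 2 / 2))) := by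
          rw [h1]
      _ = K * Real.exp (-r * t ^ 2) * ((Real.sqrt (2 * Real.pi))⁻¹ * Real.exp (-(d₁ t - σ * t) ^ 2 / 2)) := by
          rw [Real.exp_add]; ring
  have part1 : ∀ t : ℝ, 0 < t →
      HasDerivAt C
        (S * σ * stdPDF (d₁ t) + 2 * t * r * K * Real.exp (-r * t ^ 2) * stdCDF (d₂ t)) t := by
    intro t ht
    have ht' : t ≠ 0 := ne_of_gt ht
    have hσt : σ * t ≠ 0 := mul_ne_zero hσ.ne' ht'
    set D1' : ℝ := (r + σ ^ 2 / 2) / σ - L / (σ * t ^ 2) with hD1'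
    have hf : HasDerivAt (fun s : ℝ => L + (r + σ ^ 2 / 2) * s ^ 2)
        ((r + σ ^ 2 / 2) * (2 * t)) t := by
      simpa using ((hasDerivAt_pow 2 t).const_mul (r + σ ^ 2 / 2)).const_add L
    have hg : HasDerivAt (fun s : ℝ => σ * s) σ t := by
      simpa using (hasDerivAt_id t).const_mul σ
    have hd1 : HasDerivAt d₁ D1' t := by
      have hfun : d₁ = fun s : ℝ => (L + (r + σ ^ 2 / 2) * s ^ 2) / (σ * s) := funext hd₁
      rw [hfun]
      refine (hf.div hg hσt).congr_deriv ?_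
      rw [hD1']
      field_simp
      ring
    have hd2 : HasDerivAt d₂ (D1' - σ) t := by
      have hfun : d₂ = fun s : ℝ => d₁ s - σ * s := funext hd₂
      rw [hfun]
      exact hd1.sub hg
    have hE : HasDerivAt (fun s : ℝ => Real.exp (-r * s ^ 2))
        (Real.exp (-r * t ^ 2) * (-r * (2 * t))) t := by
      have h1 : HasDerivAt (fun s : ℝ => -r * s ^ 2) (-r * (2 * t)) t := by
        simpa using (hasDerivAt_pow 2 t).const_mul (-r)
      exact h1.exp
    have hCDF1 : HasDerivAt (fun s => stdCDF (d₁ s)) (stdPDF (d₁ t) * D1') t :=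
      (hasDerivAt_stdCDF (d₁ t)).comp t hd1
    have hCDF2 : HasDerivAt (fun s => stdCDF (d₂ s)) (stdPDF (d₂ t) * (D1' - σ)) t :=
      (hasDerivAt_stdCDF (d₂ t)).comp t hd2
    have hCfun : C = fun s => S * stdCDF (d₁ s) - K * Real.exp (-r * s ^ 2) * stdCDF (d₂ s) :=
      funext hC
    rw [hCfun]
    have hmain := (hCDF1.const_mul S).sub ((hE.const_mul K).mul hCDF2)
    refine hmain.congr_deriv ?_
    have hkey := key t ht
    linear_combination (D1' - σ) * hkey
  refine ⟨part1, ?_⟩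
  -- deriv C agrees with the formula on Ioi 0
  have hcongr : Set.EqOn (deriv C)
      (fun t => S * σ * stdPDF (d₁ t) + 2 * t * r * K * Real.exp (-r * t ^ 2) * stdCDF (d₂ t))
      (Set.Ioi 0) := fun t ht => (part1 t ht).deriv
  refine Tendsto.congr' (Filter.eventuallyEq_of_mem self_mem_nhdsWithin fun t ht => (hcongr ht).symm) ?_
  -- second term tends to 0
  have hterm2 : Tendsto (fun t => 2 * t * r * K * Real.exp (-r * t ^ 2) * stdCDF (d₂ t))
      (nhdsWithin 0 (Set.Ioi 0)) (nhds 0) := by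
    have hbound : ∀ t : ℝ, ‖2 * t * r * K * Real.exp (-r * t ^ 2) * stdCDF (d₂ t)‖
        ≤ 2 * |t| * |r| * K * Real.exp (|r| * t ^ 2) := by
      intro t
      have hΦ : |stdCDF (d₂ t)| ≤ 1 :=
        abs_le.2 ⟨by linarith [stdCDF_nonneg (d₂ t)], stdCDF_le_one _⟩
      rw [Real.norm_eq_abs, abs_mul]
      calc |2 * t * r * K * Real.exp (-r * t ^ 2)| * |stdCDF (d₂ t)|
          ≤ |2 * t * r * K * Real.exp (-r * t ^ 2)| * 1 :=
            mul_le_mul_of_nonneg_left hΦ (abs_nonneg _)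
        _ = 2 * |t| * |r| * K * Real.exp (-r * t ^ 2) := by
            rw [mul_one, abs_mul, abs_mul, abs_mul, Real.abs_exp, abs_of_pos hK]
            simp [abs_mul]
        _ ≤ 2 * |t| * |r| * K * Real.exp (|r| * t ^ 2) := by
            gcongr
            nlinarith [neg_abs_le r, sq_nonneg t]
    have hg : Tendsto (fun t : ℝ => 2 * |t| * |r| * K * Real.exp (|r| * t ^ 2))
        (nhdsWithin 0 (Set.Ioi 0)) (nhds 0) := by
      have hc : Continuous fun t : ℝ => 2 * |t| * |r| * K * Real.exp (|r| * t ^ 2) := by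
        fun_prop
      have h0 := (hc.tendsto 0).mono_left (nhdsWithin_le_nhds (s := Set.Ioi (0:ℝ)))
      simpa using h0
    exact squeeze_zero_norm hbound hg
  have haux : ∀ t ∈ Set.Ioi (0:ℝ), d₁ t = L / (σ * t) + ((r + σ ^ 2 / 2) / σ) * t := by
    intro t ht
    have ht' : (t : ℝ) ≠ 0 := ne_of_gt ht
    rw [hd₁]
    field_simp
  have hsq_atBot : Tendsto (fun x : ℝ => x ^ 2) atBot atTop := by
    have := (tendsto_pow_atTop (α := ℝ) (n := 2) (by norm_num)).comp
      (tendsto_neg_atBot_atTop (G := ℝ))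
    refine this.congr fun x => ?_
    simp [Function.comp]
  have hsq_atTop : Tendsto (fun x : ℝ => x ^ 2) atTop atTop :=
    tendsto_pow_atTop (α := ℝ) (n := 2) (by norm_num)
  by_cases hSK : S = K
  · rw [if_pos hSK]
    have hL0 : L = 0 := by rw [hL, hSK, div_self hK.ne', Real.log_one]
    have hd1t : Tendsto d₁ (nhdsWithin 0 (Set.Ioi 0)) (nhds 0) := by
      have hc : Tendsto (fun t : ℝ => ((r + σ ^ 2 / 2) / σ) * t)
          (nhdsWithin 0 (Set.Ioi 0)) (nhds 0) := by
        have hcc : Continuous fun t : ℝ => ((r + σ ^ 2 / 2) / σ) * t := by fun_prop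
        have h0 := (hcc.tendsto 0).mono_left (nhdsWithin_le_nhds (s := Set.Ioi (0:ℝ)))
        simpa using h0
      refine hc.congr' (Filter.eventuallyEq_of_mem self_mem_nhdsWithin fun t ht => ?_)
      rw [haux t ht, hL0]
      simp
    have hterm1 : Tendsto (fun t => S * σ * stdPDF (d₁ t)) (nhdsWithin 0 (Set.Ioi 0))
        (nhds (S * σ / Real.sqrt (2 * Real.pi))) := by
      have := ((continuous_stdPDF.tendsto 0).comp hd1t).const_mul (S * σ)
      have hval : S * σ * stdPDF 0 = S * σ / Real.sqrt (2 * Real.pi) := by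
        unfold stdPDF
        norm_num
        ring
      rw [hval] at this
      exact this
    simpa using hterm1.add hterm2
  · rw [if_neg hSK]
    have hL0 : L ≠ 0 := by
      intro h
      have h1 : S / K = 1 := Real.eq_one_of_pos_of_log_eq_zero (by positivity) h
      exact hSK (by field_simp at h1; linarith)
    have hpdf0 : Tendsto (fun t => stdPDF (d₁ t)) (nhdsWithin 0 (Set.Ioi 0)) (nhds 0) := by
      rcases hL0.lt_or_gt with hneg | hpos
      · have hd1t : Tendsto d₁ (nhdsWithin 0 (Set.Ioi 0)) atBot := by
          have h1 : Tendsto (fun t : ℝ => (L / σ) * t⁻¹) (nhdsWithin 0 (Set.Ioi 0)) atBot :=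
            tendsto_inv_nhdsGT_zero.const_mul_atTop_of_neg (by
              exact div_neg_of_neg_of_pos hneg hσ)
          have h2 : Tendsto (fun t : ℝ => ((r + σ ^ 2 / 2) / σ) * t)
              (nhdsWithin 0 (Set.Ioi 0)) (nhds 0) := by
            have hcc : Continuous fun t : ℝ => ((r + σ ^ 2 / 2) / σ) * t := by fun_prop
            have h0 := (hcc.tendsto 0).mono_left (nhdsWithin_le_nhds (s := Set.Ioi (0:ℝ)))
            simpa using h0
          have h3 := h1.atBot_add h2
          refine h3.congr' (Filter.eventuallyEq_of_mem self_mem_nhdsWithin fun t ht => ?_)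
          rw [haux t ht]
          have ht' : t ≠ 0 := ne_of_gt ht
          field_simp
        exact (tendsto_stdPDF_of_sq hsq_atBot).comp hd1t
      · have hd1t : Tendsto d₁ (nhdsWithin 0 (Set.Ioi 0)) atTop := by
          have h1 : Tendsto (fun t : ℝ => (L / σ) * t⁻¹) (nhdsWithin 0 (Set.Ioi 0)) atTop :=
            tendsto_inv_nhdsGT_zero.const_mul_atTop (by positivity)
          have h2 : Tendsto (fun t : ℝ => ((r + σ ^ 2 / 2) / σ) * t)
              (nhdsWithin 0 (Set.Ioi 0)) (nhds 0) := by
            have hcc : Continuous fun t : ℝ => ((r + σ ^ 2 / 2) / σ) * t := by fun_prop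
            have h0 := (hcc.tendsto 0).mono_left (nhdsWithin_le_nhds (s := Set.Ioi (0:ℝ)))
            simpa using h0
          have h3 := h1.atTop_add h2
          refine h3.congr' (Filter.eventuallyEq_of_mem self_mem_nhdsWithin fun t ht => ?_)
          rw [haux t ht]
          have ht' : t ≠ 0 := ne_of_gt ht
          field_simp
        exact (tendsto_stdPDF_of_sq hsq_atTop).comp hd1t
    have hterm1 : Tendsto (fun t => S * σ * stdPDF (d₁ t)) (nhdsWithin 0 (Set.Ioi 0)) (nhds 0) := by
      have := hpdf0.const_mul (S * σ)
      simpa using this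
    simpa using hterm1.add hterm2
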